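/- Let F_q be a finite field with q elements, d ≥ 0, 0 ≤ r_1 ≤ d, and let Q be a symmetric bilinear form on F_q^d of rank r_1. Then the number of symmetric bilinear forms on F_q^{d+1} of rank r_2 whose restriction to F_q^d equals Q is: q^{r_1} if r_2 = r_1; q^{r_1+1} − q^{r_1} if r_2 = r_1 + 1; q^{d+1} − q^{r_1+1} if r_2 = r_1 + 2; and 0 otherwise. -/

import Mathlib

open Matrix Module LinearMap

namespace MacW

variable {K : Type} [Field K] {d : ℕ}

/-- The extension of `Q` by border vector `v` and corner `a`, on `Fin d ⊕ Fin 1`. -/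
def Mext (Q : Matrix (Fin d) (Fin d) K) (v : Fin d → K) (a : K) :
    Matrix (Fin d ⊕ Fin 1) (Fin d ⊕ Fin 1) K :=
  Matrix.fromBlocks Q (Matrix.of fun i (_ : Fin 1) => v i)
    (Matrix.of fun (_ : Fin 1) j => v j) (Matrix.of fun _ _ => a)

lemma mem_ker_Mext_iff {Q : Matrix (Fin d) (Fin d) K} {v : Fin d → K} {a : K}
    {z : Fin d ⊕ Fin 1 → K} :
    (Mext Q v a).mulVecLin z = 0 ↔
      Q *ᵥ (z ∘ Sum.inl) + z (Sum.inr 0) • v = 0 ∧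
        v ⬝ᵥ (z ∘ Sum.inl) + z (Sum.inr 0) * a = 0 := by
  have hz : z = Sum.elim (z ∘ Sum.inl) (z ∘ Sum.inr) := by
    funext k; cases k <;> rfl
  have hB : (Matrix.of fun i (_ : Fin 1) => v i) *ᵥ (z ∘ Sum.inr) = z (Sum.inr 0) • v := by
    funext i; simp [Matrix.mulVec, dotProduct, mul_comm]
  have hC : (Matrix.of fun (_ : Fin 1) j => v j) *ᵥ (z ∘ Sum.inl)
      = fun _ : Fin 1 => v ⬝ᵥ (z ∘ Sum.inl) := rfl
  have hD : (Matrix.of fun (_ : Fin 1) (_ : Fin 1) => a) *ᵥ (z ∘ Sum.inr)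
      = fun _ : Fin 1 => z (Sum.inr 0) * a := by
    funext _; simp [Matrix.mulVec, dotProduct, mul_comm]
  rw [mulVecLin_apply]
  conv_lhs => rw [hz]
  rw [Mext, fromBlocks_mulVec, Sum.elim_comp_inl, Sum.elim_comp_inr, hB, hC, hD]
  constructor
  · intro h
    exact ⟨funext fun i => congrFun h (Sum.inl i), congrFun h (Sum.inr 0)⟩
  · rintro ⟨h1, h2⟩
    funext k
    rcases k with i | j
    · exact congrFun h1 i
    · rw [Subsingleton.elim j 0]; exact h2

/-- Shear linear equivalence `z ↦ (z∘inl + z(inr 0) • w, z (inr 0))`. -/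
def shear (w : Fin d → K) : ((Fin d ⊕ Fin 1) → K) ≃ₗ[K] (Fin d → K) × K where
  toFun z := (z ∘ Sum.inl + z (Sum.inr 0) • w, z (Sum.inr 0))
  invFun p := Sum.elim (p.1 - p.2 • w) (fun _ => p.2)
  map_add' z z' := by
    ext i
    · show (z (Sum.inl i) + z' (Sum.inl i)) + (z (Sum.inr 0) + z' (Sum.inr 0)) * w i = _
      show _ = (z (Sum.inl i) + z (Sum.inr 0) * w i) + (z' (Sum.inl i) + z' (Sum.inr 0) * w i)
      ring
    · rfl
  map_smul' c z := by
    ext i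
    · show c * z (Sum.inl i) + (c * z (Sum.inr 0)) * w i = c * (z (Sum.inl i) + z (Sum.inr 0) * w i)
      ring
    · rfl
  left_inv z := by
    funext k
    rcases k with i | j
    · show (z (Sum.inl i) + z (Sum.inr 0) * w i) - z (Sum.inr 0) * w i = z (Sum.inl i)
      ring
    · show z (Sum.inr 0) = z (Sum.inr j)
      rw [Subsingleton.elim j 0]
  right_inv p := by
    ext i
    · show (p.1 i - p.2 * w i) + p.2 * w i = p.1 i
      ring
    · rfl

@[simp] lemma shear_apply (w : Fin d → K) (z : (Fin d ⊕ Fin 1) → K) :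
    shear w z = (z ∘ Sum.inl + z (Sum.inr 0) • w, z (Sum.inr 0)) := rfl

/-- finrank of a product of submodules. -/
lemma finrank_prod_submodule {V W : Type*} [AddCommGroup V] [Module K V]
    [AddCommGroup W] [Module K W] [FiniteDimensional K V] [FiniteDimensional K W]
    (p : Submodule K V) (q : Submodule K W) :
    finrank K ↥(p.prod q) = finrank K ↥p + finrank K ↥q := by
  have e : ↥(p.prod q) ≃ₗ[K] ↥p × ↥q :=
    { toFun := fun z => (⟨z.1.1, z.2.1⟩, ⟨z.1.2, z.2.2⟩)
      invFun := fun z => ⟨(z.1.1, z.2.1), ⟨z.1.2, z.2.2⟩⟩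
      map_add' := fun _ _ => rfl
      map_smul' := fun _ _ => rfl
      left_inv := fun _ => rfl
      right_inv := fun _ => rfl }
  rw [e.finrank_eq, finrank_prod]

lemma finrank_comap_prod {V W₁ W₂ : Type*} [AddCommGroup V] [Module K V]
    [AddCommGroup W₁] [Module K W₁] [AddCommGroup W₂] [Module K W₂]
    [FiniteDimensional K W₁] [FiniteDimensional K W₂]
    (e : V ≃ₗ[K] W₁ × W₂) (p : Submodule K W₁) (q : Submodule K W₂) :
    finrank K ↥(Submodule.comap (e : V →ₗ[K] W₁ × W₂) (p.prod q))
      = finrank K ↥p + finrank K ↥q := by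
  rw [Submodule.comap_equiv_eq_map_symm, LinearEquiv.finrank_map_eq, finrank_prod_submodule]

variable {Q : Matrix (Fin d) (Fin d) K}

lemma dot_symm (hQ : Q.IsSymm) (w x : Fin d → K) : (Q *ᵥ w) ⬝ᵥ x = (Q *ᵥ x) ⬝ᵥ w := by
  calc (Q *ᵥ w) ⬝ᵥ x = x ⬝ᵥ (Q *ᵥ w) := dotProduct_comm _ _
    _ = (x ᵥ* Q) ⬝ᵥ w := dotProduct_mulVec _ _ _
    _ = (Qᵀ *ᵥ x) ⬝ᵥ w := by rw [mulVec_transpose]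
    _ = (Q *ᵥ x) ⬝ᵥ w := by rw [show Qᵀ = Q from hQ]

def dotLin (v : Fin d → K) : (Fin d → K) →ₗ[K] K where
  toFun x := v ⬝ᵥ x
  map_add' x y := by simp [dotProduct, mul_add, Finset.sum_add_distrib]
  map_smul' c x := by simp [dotProduct, Finset.mul_sum, mul_left_comm]

@[simp] lemma dotLin_apply (v x : Fin d → K) : dotLin v x = v ⬝ᵥ x := rfl

lemma ker_Mext_mem_eq (hQ : Q.IsSymm) (w : Fin d → K) :
    ker (Mext Q (Q *ᵥ w) (w ⬝ᵥ (Q *ᵥ w))).mulVecLin =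
      Submodule.comap (shear w).toLinearMap ((ker Q.mulVecLin).prod ⊤) := by
  ext z
  rw [mem_ker, mem_ker_Mext_iff, Submodule.mem_comap]
  simp only [LinearEquiv.coe_coe, shear_apply, Submodule.mem_prod, Submodule.mem_top, and_true,
    mem_ker, mulVecLin_apply, mulVec_add, mulVec_smul]
  constructor
  · rintro ⟨h1, -⟩; exact h1
  · intro h1
    refine ⟨h1, ?_⟩
    have hx : Q *ᵥ (z ∘ Sum.inl) = -(z (Sum.inr 0) • (Q *ᵥ w)) := by
      rw [eq_neg_iff_add_eq_zero]; exact h1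
    rw [dot_symm hQ, hx, neg_dotProduct, smul_dotProduct, smul_eq_mul,
      dotProduct_comm (Q *ᵥ w) w]
    ring

lemma ker_Mext_mem_ne (hQ : Q.IsSymm) (w : Fin d → K) {a : K} (ha : a ≠ w ⬝ᵥ (Q *ᵥ w)) :
    ker (Mext Q (Q *ᵥ w) a).mulVecLin =
      Submodule.comap (shear w).toLinearMap ((ker Q.mulVecLin).prod ⊥) := by
  ext z
  rw [mem_ker, mem_ker_Mext_iff, Submodule.mem_comap]
  simp only [LinearEquiv.coe_coe, shear_apply, Submodule.mem_prod, Submodule.mem_bot,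
    mem_ker, mulVecLin_apply, mulVec_add, mulVec_smul]
  constructor
  · rintro ⟨h1, h2⟩
    refine ⟨h1, ?_⟩
    have hx : Q *ᵥ (z ∘ Sum.inl) = -(z (Sum.inr 0) • (Q *ᵥ w)) := by
      rw [eq_neg_iff_add_eq_zero]; exact h1
    rw [dot_symm hQ, hx, neg_dotProduct, smul_dotProduct, smul_eq_mul,
      dotProduct_comm (Q *ᵥ w) w] at h2
    have h3 : z (Sum.inr 0) * (a - w ⬝ᵥ (Q *ᵥ w)) = 0 := by linear_combination h2
    rcases mul_eq_zero.mp h3 with h | h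
    · exact h
    · exact absurd (sub_eq_zero.mp h) ha
  · rintro ⟨h1, h2⟩
    rw [h2, zero_smul, add_zero] at h1 ⊢
    refine ⟨h1, ?_⟩
    rw [dot_symm hQ, h1, zero_dotProduct, zero_mul, add_zero]

lemma ker_Mext_not_mem {v : Fin d → K} (hv : v ∉ range Q.mulVecLin) (a : K) :
    ker (Mext Q v a).mulVecLin =
      Submodule.comap (shear (0 : Fin d → K)).toLinearMap
        ((ker Q.mulVecLin ⊓ ker (dotLin v)).prod ⊥) := by
  ext z
  rw [mem_ker, mem_ker_Mext_iff, Submodule.mem_comap]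
  simp only [LinearEquiv.coe_coe, shear_apply, Submodule.mem_prod, Submodule.mem_bot,
    Submodule.mem_inf, mem_ker, mulVecLin_apply, dotLin_apply, smul_zero, add_zero]
  constructor
  · rintro ⟨h1, h2⟩
    have ht : z (Sum.inr 0) = 0 := by
      by_contra ht
      apply hv
      refine ⟨-(z (Sum.inr 0))⁻¹ • (z ∘ Sum.inl), ?_⟩
      rw [mulVecLin_apply, mulVec_smul]
      have hx : Q *ᵥ (z ∘ Sum.inl) = -(z (Sum.inr 0) • v) := by
        rw [eq_neg_iff_add_eq_zero]; exact h1
      rw [hx, smul_neg, neg_smul, neg_neg, smul_smul, inv_mul_cancel₀ ht, one_smul]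
    rw [ht, zero_smul, add_zero] at h1
    rw [ht, zero_mul, add_zero] at h2
    exact ⟨⟨h1, h2⟩, ht⟩
  · rintro ⟨⟨h1, h2⟩, h3⟩
    rw [h3, zero_smul, add_zero, zero_mul, add_zero]
    exact ⟨h1, h2⟩

lemma finrank_inf {v : Fin d → K} (hx : ∃ x, Q.mulVecLin x = 0 ∧ v ⬝ᵥ x ≠ 0) :
    finrank K ↥(ker Q.mulVecLin ⊓ ker (dotLin v)) + 1 = finrank K ↥(ker Q.mulVecLin) := by
  obtain ⟨x₀, hx0, hvx⟩ := hx
  set p := ker Q.mulVecLin with hp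
  set g : ↥p →ₗ[K] K := (dotLin v).comp p.subtype with hg
  have hrange : range g = ⊤ := by
    rw [range_eq_top]
    intro c
    refine ⟨(c * (v ⬝ᵥ x₀)⁻¹) • ⟨x₀, hx0⟩, ?_⟩
    show dotLin v ((c * (v ⬝ᵥ x₀)⁻¹) • x₀) = c
    rw [_root_.map_smul, dotLin_apply, smul_eq_mul, mul_assoc, inv_mul_cancel₀ hvx, mul_one]
  have hker : ker g = Submodule.comap p.subtype (p ⊓ ker (dotLin v)) := by
    ext x
    simp only [hg, mem_ker, LinearMap.comp_apply, Submodule.mem_comap, Submodule.mem_inf,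
      Submodule.coe_subtype]
    exact ⟨fun h => ⟨x.2, h⟩, fun h => h.2⟩
  have h1 := finrank_range_add_finrank_ker g
  rw [hrange, hker, finrank_top, finrank_self,
    (Submodule.comapSubtypeEquivOfLe inf_le_left).finrank_eq] at h1
  omega

lemma exists_dual (hQ : Q.IsSymm) {v : Fin d → K} (hv : v ∉ range Q.mulVecLin) :
    ∃ x, Q.mulVecLin x = 0 ∧ v ⬝ᵥ x ≠ 0 := by
  by_contra hcon
  push_neg at hcon
  set Q' : Matrix (Fin d ⊕ Fin 1) (Fin d) K :=
    Matrix.fromRows Q (Matrix.of fun (_ : Fin 1) j => v j) with hQ'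
  have hker : ker Q'.mulVecLin = ker Q.mulVecLin := by
    ext x
    simp only [mem_ker, mulVecLin_apply, hQ', fromRows_mulVec]
    constructor
    · intro hz
      funext i; exact congrFun hz (Sum.inl i)
    · intro hz
      funext k; rcases k with i | j
      · exact congrFun hz i
      · show v ⬝ᵥ x = 0
        exact hcon x (by rw [mulVecLin_apply]; exact hz)
  have hQt : Q'ᵀ = Matrix.fromCols Q (Matrix.of fun i (_ : Fin 1) => v i) := by
    rw [hQ', transpose_fromRows, show Qᵀ = Q from hQ]
    congr 1
  have hrank : (Q'ᵀ).rank = Q.rank := by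
    rw [rank_transpose]
    have h1 := finrank_range_add_finrank_ker Q'.mulVecLin
    have h2 := finrank_range_add_finrank_ker Q.mulVecLin
    rw [hker] at h1
    have e1 : Q'.rank = finrank K ↥(range Q'.mulVecLin) := rfl
    have e2 : Q.rank = finrank K ↥(range Q.mulVecLin) := rfl
    omega
  have hle : range Q.mulVecLin ≤ range (Q'ᵀ).mulVecLin := by
    rintro y ⟨x, rfl⟩
    refine ⟨Sum.elim x 0, ?_⟩
    rw [mulVecLin_apply, hQt, fromCols_mulVec_sumElim, mulVecLin_apply, mulVec_zero, add_zero]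
  have heq : range Q.mulVecLin = range (Q'ᵀ).mulVecLin := by
    refine Submodule.eq_of_le_of_finrank_le hle (le_of_eq ?_)
    exact hrank
  apply hv
  rw [heq]
  refine ⟨Sum.elim 0 (fun _ => 1), ?_⟩
  rw [mulVecLin_apply, hQt, fromCols_mulVec_sumElim, mulVec_zero, zero_add]
  funext i
  simp [Matrix.mulVec, dotProduct]

lemma rank_nullity_Mext (Q : Matrix (Fin d) (Fin d) K) (v : Fin d → K) (a : K) :
    (Mext Q v a).rank + finrank K ↥(ker (Mext Q v a).mulVecLin) = d + 1 := by
  have h := finrank_range_add_finrank_ker (Mext Q v a).mulVecLin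
  rwa [finrank_pi, Fintype.card_sum, Fintype.card_fin, Fintype.card_fin] at h

lemma rank_nullity_Q (Q : Matrix (Fin d) (Fin d) K) :
    Q.rank + finrank K ↥(ker Q.mulVecLin) = d := by
  have h := finrank_range_add_finrank_ker Q.mulVecLin
  rwa [finrank_pi, Fintype.card_fin] at h

lemma rank_Mext_mem_eq (hQ : Q.IsSymm) (w : Fin d → K) :
    (Mext Q (Q *ᵥ w) (w ⬝ᵥ (Q *ᵥ w))).rank = Q.rank := by
  have h1 := rank_nullity_Mext Q (Q *ᵥ w) (w ⬝ᵥ (Q *ᵥ w))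
  have h2 := rank_nullity_Q Q
  rw [ker_Mext_mem_eq hQ w, finrank_comap_prod] at h1
  simp only [finrank_top, finrank_self] at h1
  omega

lemma rank_Mext_mem_ne (hQ : Q.IsSymm) (w : Fin d → K) {a : K} (ha : a ≠ w ⬝ᵥ (Q *ᵥ w)) :
    (Mext Q (Q *ᵥ w) a).rank = Q.rank + 1 := by
  have h1 := rank_nullity_Mext Q (Q *ᵥ w) a
  have h2 := rank_nullity_Q Q
  rw [ker_Mext_mem_ne hQ w ha, finrank_comap_prod] at h1
  simp only [finrank_bot] at h1
  omega

lemma rank_Mext_not_mem (hQ : Q.IsSymm) {v : Fin d → K} (hv : v ∉ range Q.mulVecLin)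
    (a : K) : (Mext Q v a).rank = Q.rank + 2 := by
  have h1 := rank_nullity_Mext Q v a
  have h2 := rank_nullity_Q Q
  have h3 := finrank_inf (exists_dual hQ hv)
  rw [ker_Mext_not_mem hv a, finrank_comap_prod] at h1
  simp only [finrank_bot] at h1
  omega

def MextK (Q : Matrix (Fin d) (Fin d) K) (v : Fin d → K) (a : K) :
    Matrix (Fin (d+1)) (Fin (d+1)) K :=
  Matrix.reindex finSumFinEquiv finSumFinEquiv (Mext Q v a)

lemma symm_castLE (i : Fin d) :
    (finSumFinEquiv.symm (Fin.castLE (Nat.le_succ d) i) : Fin d ⊕ Fin 1) = Sum.inl i := by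
  rw [show Fin.castLE (Nat.le_succ d) i = Fin.castAdd 1 i from rfl]
  exact finSumFinEquiv_symm_apply_castAdd i

lemma symm_last : (finSumFinEquiv.symm (Fin.last d) : Fin d ⊕ Fin 1) = Sum.inr 0 := by
  rw [show Fin.last d = Fin.natAdd d 0 from by ext; simp]
  exact finSumFinEquiv_symm_apply_natAdd 0

variable {v : Fin d → K} {a : K}

@[simp] lemma MextK_cast_cast (i j : Fin d) :
    MextK Q v a (Fin.castLE (Nat.le_succ d) i) (Fin.castLE (Nat.le_succ d) j) = Q i j := by
  simp [MextK, Matrix.reindex_apply, Matrix.submatrix_apply, symm_castLE, Mext]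

@[simp] lemma MextK_cast_last (i : Fin d) :
    MextK Q v a (Fin.castLE (Nat.le_succ d) i) (Fin.last d) = v i := by
  simp [MextK, Matrix.reindex_apply, Matrix.submatrix_apply, symm_castLE, symm_last, Mext]

@[simp] lemma MextK_last_cast (j : Fin d) :
    MextK Q v a (Fin.last d) (Fin.castLE (Nat.le_succ d) j) = v j := by
  simp [MextK, Matrix.reindex_apply, Matrix.submatrix_apply, symm_castLE, symm_last, Mext]

@[simp] lemma MextK_last_last : MextK Q v a (Fin.last d) (Fin.last d) = a := by
  simp [MextK, Matrix.reindex_apply, Matrix.submatrix_apply, symm_last, Mext]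

lemma rank_MextK : (MextK Q v a).rank = (Mext Q v a).rank :=
  Matrix.rank_reindex _ _ _

lemma isSymm_MextK (hQ : Q.IsSymm) : (MextK Q v a).IsSymm := by
  have h : (Mext Q v a).IsSymm := by
    rw [Mext, isSymm_fromBlocks_iff]
    exact ⟨hQ, rfl, rfl, IsSymm.ext fun i j => rfl⟩
  rw [MextK, Matrix.reindex_apply]
  exact h.submatrix _

lemma MextK_submatrix :
    (MextK Q v a).submatrix (Fin.castLE (Nat.le_succ d)) (Fin.castLE (Nat.le_succ d)) = Q := by
  ext i j
  simp [Matrix.submatrix_apply]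

lemma eq_MextK {M : Matrix (Fin (d+1)) (Fin (d+1)) K} (hs : M.IsSymm)
    (hsub : M.submatrix (Fin.castLE (Nat.le_succ d)) (Fin.castLE (Nat.le_succ d)) = Q) :
    M = MextK Q (fun i => M (Fin.castLE (Nat.le_succ d) i) (Fin.last d))
      (M (Fin.last d) (Fin.last d)) := by
  ext i j
  induction i using Fin.lastCases with
  | last =>
    induction j using Fin.lastCases with
    | last => simp
    | cast j =>
      rw [show Fin.castSucc j = Fin.castLE (Nat.le_succ d) j from rfl, MextK_last_cast]
      exact hs.apply _ _
  | cast i =>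
    induction j using Fin.lastCases with
    | last =>
      rw [show Fin.castSucc i = Fin.castLE (Nat.le_succ d) i from rfl, MextK_cast_last]
    | cast j =>
      rw [show Fin.castSucc i = Fin.castLE (Nat.le_succ d) i from rfl,
        show Fin.castSucc j = Fin.castLE (Nat.le_succ d) j from rfl, MextK_cast_cast]
      exact congrFun (congrFun hsub i) j |>.symm ▸ rfl

lemma rank_Mext_eq_iff (hQ : Q.IsSymm) {v w : Fin d → K} (hw : Q *ᵥ w = v) (a : K) :
    (Mext Q v a).rank = Q.rank ↔ a = w ⬝ᵥ v := by
  subst hw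
  by_cases h : a = w ⬝ᵥ (Q *ᵥ w)
  · subst h; simp [rank_Mext_mem_eq hQ w]
  · rw [rank_Mext_mem_ne hQ w h]
    simp [h]

lemma rank_Mext_succ_iff (hQ : Q.IsSymm) {v w : Fin d → K} (hw : Q *ᵥ w = v) (a : K) :
    (Mext Q v a).rank = Q.rank + 1 ↔ a ≠ w ⬝ᵥ v := by
  subst hw
  by_cases h : a = w ⬝ᵥ (Q *ᵥ w)
  · subst h; simp [rank_Mext_mem_eq hQ w]
  · rw [rank_Mext_mem_ne hQ w h]
    simp [h]

end MacW

open MacW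

/-- MacWilliams' extension count: if `Q` is a symmetric bilinear form of rank `r₁` on
`F_q^d`, the number of symmetric bilinear forms on `F_q^{d+1}` of rank `r₂` restricting
to `Q` (along the embedding of `F_q^d` as the span of the first `d` standard basis
vectors) is `q^{r₁}` if `r₂ = r₁`, `q^{r₁+1} - q^{r₁}` if `r₂ = r₁ + 1`,
`q^{d+1} - q^{r₁+1}` if `r₂ = r₁ + 2`, and `0` otherwise. -/
theorem stmt_7 (K : Type) [Field K] [Fintype K] (d r₁ r₂ : ℕ) (hr : r₁ ≤ d)
    (Q : Matrix (Fin d) (Fin d) K) (hQ : Q.IsSymm) (hQrank : Q.rank = r₁) :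
    Nat.card {M : Matrix (Fin (d + 1)) (Fin (d + 1)) K //
        M.IsSymm ∧ M.rank = r₂ ∧
        M.submatrix (Fin.castLE (Nat.le_succ d)) (Fin.castLE (Nat.le_succ d)) = Q} =
      if r₂ = r₁ then (Fintype.card K) ^ r₁
      else if r₂ = r₁ + 1 then (Fintype.card K) ^ (r₁ + 1) - (Fintype.card K) ^ r₁
      else if r₂ = r₁ + 2 then (Fintype.card K) ^ (d + 1) - (Fintype.card K) ^ (r₁ + 1)
      else 0 := by
  classical
  set R := LinearMap.range Q.mulVecLin with hR
  have hfR : Module.finrank K ↥R = r₁ := hQrank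
  have hcardR : Nat.card ↥R = Fintype.card K ^ r₁ := by
    have : Fintype ↥R := Fintype.ofFinite _
    rw [Nat.card_eq_fintype_card, card_eq_pow_finrank (K := K) (V := ↥R), hfR]
  -- step 1 : reduce to pairs
  have e1 : {M : Matrix (Fin (d + 1)) (Fin (d + 1)) K //
        M.IsSymm ∧ M.rank = r₂ ∧
        M.submatrix (Fin.castLE (Nat.le_succ d)) (Fin.castLE (Nat.le_succ d)) = Q} ≃
      {p : (Fin d → K) × K // (Mext Q p.1 p.2).rank = r₂} :=
    { toFun := fun M => ⟨(fun i => M.1 (Fin.castLE (Nat.le_succ d) i) (Fin.last d),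
        M.1 (Fin.last d) (Fin.last d)), by
          obtain ⟨M, hs, hr2, hsub⟩ := M
          rw [← rank_MextK, ← eq_MextK hs hsub]
          exact hr2⟩
      invFun := fun p => ⟨MextK Q p.1.1 p.1.2, isSymm_MextK hQ,
        by rw [rank_MextK]; exact p.2, MextK_submatrix⟩
      left_inv := fun M => Subtype.ext (eq_MextK M.2.1 M.2.2.2).symm
      right_inv := fun p => Subtype.ext
        (Prod.ext (funext fun i => MextK_cast_last i) MextK_last_last) }
  rw [Nat.card_congr e1]
  by_cases h0 : r₂ = r₁
  · -- rank r₁ : one extension value per vector in the range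
    rw [if_pos h0, ← hcardR]
    refine (Nat.card_congr (Equiv.ofBijective
      (fun u : ↥R => (⟨(u.1, u.2.choose ⬝ᵥ u.1), by
        have hw : Q *ᵥ u.2.choose = u.1 := by
          have h := u.2.choose_spec; rwa [mulVecLin_apply] at h
        rw [h0, ← hQrank]
        exact (rank_Mext_eq_iff hQ hw _).mpr rfl⟩ :
          {p : (Fin d → K) × K // (Mext Q p.1 p.2).rank = r₂})) ⟨?_, ?_⟩)).symm
    · intro u u' h
      exact Subtype.ext (congrArg Prod.fst (congrArg Subtype.val h))
    · rintro ⟨⟨v, a⟩, hp⟩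
      have hvR : v ∈ R := by
        by_contra hv
        rw [rank_Mext_not_mem hQ hv, hQrank] at hp
        omega
      refine ⟨⟨v, hvR⟩, ?_⟩
      apply Subtype.ext
      have hw : Q *ᵥ hvR.choose = v := by
        have h := hvR.choose_spec; rwa [mulVecLin_apply] at h
      have ha : a = hvR.choose ⬝ᵥ v :=
        (rank_Mext_eq_iff hQ hw a).mp (by rw [hp, hQrank]; exact h0)
      exact Prod.ext rfl ha.symm
  rw [if_neg h0]
  by_cases h1 : r₂ = r₁ + 1
  · -- rank r₁ + 1
    rw [if_pos h1]
    have hcard2 : Nat.card {b : K // b ≠ 0} = Fintype.card K - 1 := by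
      rw [Nat.card_eq_fintype_card, Fintype.card_subtype_compl, Fintype.card_subtype_eq]
    have e2 : ↥R × {b : K // b ≠ 0} ≃
        {p : (Fin d → K) × K // (Mext Q p.1 p.2).rank = r₂} := by
      refine Equiv.ofBijective (fun x =>
        (⟨(x.1.1, x.1.2.choose ⬝ᵥ x.1.1 + x.2.1), by
          have hw : Q *ᵥ x.1.2.choose = x.1.1 := by
            have h := x.1.2.choose_spec; rwa [mulVecLin_apply] at h
          rw [h1, ← hQrank]
          exact (rank_Mext_succ_iff hQ hw _).mpr
            (fun hcon => x.2.2 (by simpa using hcon))⟩ :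
            {p : (Fin d → K) × K // (Mext Q p.1 p.2).rank = r₂})) ⟨?_, ?_⟩
      · rintro ⟨⟨v, hv⟩, ⟨b, hb⟩⟩ ⟨⟨v', hv'⟩, ⟨b', hb'⟩⟩ hxy
        have hval := congrArg Subtype.val hxy
        have hfst : v = v' := congrArg Prod.fst hval
        subst hfst
        have hsnd := congrArg Prod.snd hval
        simp only at hsnd
        exact Prod.ext (Subtype.ext rfl) (Subtype.ext (add_left_cancel hsnd))
      · rintro ⟨⟨v, a⟩, hp⟩
        have hvR : v ∈ R := by
          by_contra hv
          rw [rank_Mext_not_mem hQ hv, hQrank] at hp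
          omega
        have hw : Q *ᵥ hvR.choose = v := by
          have h := hvR.choose_spec; rwa [mulVecLin_apply] at h
        have hb : a - hvR.choose ⬝ᵥ v ≠ 0 := by
          intro hcon
          have ha : a = hvR.choose ⬝ᵥ v := by
            have := sub_eq_zero.mp hcon; exact this
          have := (rank_Mext_eq_iff hQ hw a).mpr ha
          rw [hp, hQrank] at this
          omega
        refine ⟨(⟨v, hvR⟩, ⟨a - hvR.choose ⬝ᵥ v, hb⟩), ?_⟩
        apply Subtype.ext
        exact Prod.ext rfl (by simp)
    rw [Nat.card_congr e2.symm, Nat.card_prod, hcardR, hcard2, Nat.mul_sub, mul_one, ← pow_succ]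
  rw [if_neg h1]
  by_cases h2 : r₂ = r₁ + 2
  · -- rank r₁ + 2
    rw [if_pos h2]
    have e2 : {v : Fin d → K // v ∉ R} × K ≃
        {p : (Fin d → K) × K // (Mext Q p.1 p.2).rank = r₂} := by
      refine Equiv.ofBijective (fun x =>
        (⟨(x.1.1, x.2), by rw [rank_Mext_not_mem hQ x.1.2 x.2, hQrank, h2]⟩ :
          {p : (Fin d → K) × K // (Mext Q p.1 p.2).rank = r₂})) ⟨?_, ?_⟩
      · rintro ⟨⟨v, hv⟩, b⟩ ⟨⟨v', hv'⟩, b'⟩ hxy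
        have hval := congrArg Subtype.val hxy
        have hf : v = v' := congrArg Prod.fst hval
        have hs : b = b' := congrArg Prod.snd hval
        subst hf; subst hs
        exact Prod.ext (Subtype.ext rfl) rfl
      · rintro ⟨⟨v, a⟩, hp⟩
        have hvR : v ∉ R := by
          intro hv
          obtain ⟨w, hw0⟩ := hv
          have hw : Q *ᵥ w = v := by rwa [mulVecLin_apply] at hw0
          by_cases ha : a = w ⬝ᵥ v
          · have := (rank_Mext_eq_iff hQ hw a).mpr ha
            rw [hp, hQrank] at this; omega
          · have := (rank_Mext_succ_iff hQ hw a).mpr ha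
            rw [hp, hQrank] at this; omega
        exact ⟨(⟨v, hvR⟩, a), rfl⟩
    have hsplit := Nat.card_congr (Equiv.sumCompl (fun v : Fin d → K => v ∈ R)).symm
    rw [Nat.card_sum] at hsplit
    have hfull : Nat.card (Fin d → K) = Fintype.card K ^ d := by
      rw [Nat.card_eq_fintype_card]
      simp [Fintype.card_fun]
    have hmemcard : Nat.card {v : Fin d → K // v ∈ R} = Fintype.card K ^ r₁ := by
      rw [← hcardR]
    have hcompl : Nat.card {v : Fin d → K // v ∉ R} =
        Fintype.card K ^ d - Fintype.card K ^ r₁ := by omega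
    rw [Nat.card_congr e2.symm, Nat.card_prod, hcompl, Nat.card_eq_fintype_card,
      Nat.sub_mul, ← pow_succ, ← pow_succ]
  · -- impossible rank
    rw [if_neg h2]
    have hempty : IsEmpty {p : (Fin d → K) × K // (Mext Q p.1 p.2).rank = r₂} := by
      refine ⟨fun x => ?_⟩
      obtain ⟨⟨v, a⟩, hp⟩ := x
      by_cases hv : v ∈ R
      · obtain ⟨w, hw0⟩ := hv
        have hw : Q *ᵥ w = v := by rwa [mulVecLin_apply] at hw0
        by_cases ha : a = w ⬝ᵥ v
        · have := (rank_Mext_eq_iff hQ hw a).mpr ha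
          rw [hp, hQrank] at this; omega
        · have := (rank_Mext_succ_iff hQ hw a).mpr ha
          rw [hp, hQrank] at this; omega
      · have := rank_Mext_not_mem hQ hv a
        rw [hp, hQrank] at this; omega
    exact Nat.card_of_isEmpty
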